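/- Second Gauss' Test: Let (a_n) be a monotone decreasing sequence of positive reals with a_{2n}/a_n = 1/2 − β/ln(n) + γ(n)/(ln n)^p for all n ≥ 2, where p > 1, β constant, and γ bounded. If β > (ln 2)/2 then ∑ a_n converges, and if β ≤ (ln 2)/2 then ∑ a_n diverges. -/

import Mathlib

open Filter Topology

private lemma tendsto_const_div_rpow (C q : ℝ) (hq : 0 < q) :
    Tendsto (fun k : ℕ => C / (k : ℝ) ^ q) atTop (nhds 0) :=
  tendsto_const_nhds.div_atTop
    ((tendsto_rpow_atTop hq).comp tendsto_natCast_atTop_atTop)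

private lemma tendsto_log_div_rpow (q : ℝ) (hq : 0 < q) :
    Tendsto (fun k : ℕ => Real.log k / (k : ℝ) ^ q) atTop (nhds 0) :=
  ((isLittleO_log_rpow_atTop hq).tendsto_div_nhds_zero).comp tendsto_natCast_atTop_atTop

private lemma tendsto_log_div_self :
    Tendsto (fun k : ℕ => Real.log k / (k : ℝ)) atTop (nhds 0) := by
  have := tendsto_log_div_rpow 1 one_pos
  simpa [Real.rpow_one] using this

private lemma ratio_comp {c d : ℕ → ℝ} {N : ℕ}
    (hc : ∀ k, N ≤ k → 0 < c k) (hd : ∀ k, N ≤ k → 0 < d k)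
    (h : ∀ k, N ≤ k → c (k + 1) * d k ≤ c k * d (k + 1)) :
    ∀ k, N ≤ k → c k * d N ≤ c N * d k := by
  intro k hk
  induction k, hk using Nat.le_induction with
  | base => exact le_rfl
  | succ k hk ih =>
    have h1 := h k hk
    have hdk := hd k hk
    have hdk1 := hd (k + 1) (by omega)
    have hdN := hd N le_rfl
    have hcN := hc N le_rfl
    nlinarith [mul_le_mul_of_nonneg_right h1 hdN.le,
      mul_le_mul_of_nonneg_right ih hdk1.le]

private lemma not_summable_nat_log_inv :
    ¬ Summable (fun n : ℕ => ((n : ℝ) * Real.log n)⁻¹) := by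
  intro h
  have hgs : Summable (fun n : ℕ => (((n : ℝ) + 1) * Real.log ((n : ℝ) + 1))⁻¹) := by
    have := (summable_nat_add_iff 1).mpr h
    simpa [Nat.cast_add] using this
  have h_nonneg : ∀ n : ℕ, 0 ≤ (((n : ℝ) + 1) * Real.log ((n : ℝ) + 1))⁻¹ := by
    intro n
    have h1 : (0:ℝ) ≤ (n : ℝ) + 1 := by positivity
    have h2 : (0:ℝ) ≤ Real.log ((n : ℝ) + 1) := Real.log_nonneg (by push_cast; linarith [Nat.cast_nonneg (α := ℝ) n])
    positivity
  have h_mono : ∀ ⦃m n : ℕ⦄, 0 < m → m ≤ n →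
      (((n : ℝ) + 1) * Real.log ((n : ℝ) + 1))⁻¹ ≤ (((m : ℝ) + 1) * Real.log ((m : ℝ) + 1))⁻¹ := by
    intro m n hm hmn
    have hm1 : (2:ℝ) ≤ (m : ℝ) + 1 := by
      have : (1:ℕ) ≤ m := hm
      have h1 : (1:ℝ) ≤ (m:ℝ) := by exact_mod_cast this
      linarith
    have hmn' : (m : ℝ) + 1 ≤ (n : ℝ) + 1 := by
      have : (m:ℝ) ≤ (n:ℝ) := by exact_mod_cast hmn
      linarith
    have hlogm : 0 < Real.log ((m : ℝ) + 1) := Real.log_pos (by linarith)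
    have hlogmn : Real.log ((m : ℝ) + 1) ≤ Real.log ((n : ℝ) + 1) :=
      Real.log_le_log (by linarith) hmn'
    have hpos : 0 < ((m : ℝ) + 1) * Real.log ((m : ℝ) + 1) := by positivity
    apply inv_anti₀ hpos
    have : (0:ℝ) < (m:ℝ) + 1 := by linarith
    nlinarith
  have hcond := (summable_condensed_iff_of_nonneg h_nonneg h_mono).mpr hgs
  have hL2 : (0:ℝ) < Real.log 2 := Real.log_pos (by norm_num)
  have key : ∀ k : ℕ, (2 * Real.log 2 * ((k : ℝ) + 1))⁻¹ ≤
      (2:ℝ) ^ k * ((((2 ^ k : ℕ) : ℝ) + 1) * Real.log (((2 ^ k : ℕ) : ℝ) + 1))⁻¹ := by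
    intro k
    have h2k : (1:ℝ) ≤ (2:ℝ) ^ k := one_le_pow₀ (by norm_num)
    have hc : ((2 ^ k : ℕ) : ℝ) = (2:ℝ) ^ k := by push_cast; ring
    rw [hc]
    have hXpos : (0:ℝ) < ((2:ℝ) ^ k + 1) * Real.log ((2:ℝ) ^ k + 1) := by
      have : (0:ℝ) < Real.log ((2:ℝ) ^ k + 1) := Real.log_pos (by linarith)
      positivity
    have hYpos : (0:ℝ) < 2 * Real.log 2 * ((k : ℝ) + 1) := by positivity
    have hlogle : Real.log ((2:ℝ) ^ k + 1) ≤ ((k : ℝ) + 1) * Real.log 2 := by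
      have h1 : (2:ℝ) ^ k + 1 ≤ (2:ℝ) ^ (k + 1) := by
        rw [pow_succ]; linarith
      have := Real.log_le_log (by linarith) h1
      rwa [Real.log_pow, Nat.cast_add, Nat.cast_one] at this
    have hXle : ((2:ℝ) ^ k + 1) * Real.log ((2:ℝ) ^ k + 1) ≤
        (2:ℝ) ^ k * (2 * Real.log 2 * ((k : ℝ) + 1)) := by
      have hb : (0:ℝ) ≤ Real.log ((2:ℝ) ^ k + 1) := by
        apply Real.log_nonneg; linarith
      have h1 : (2:ℝ) ^ k + 1 ≤ 2 * (2:ℝ) ^ k := by linarith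
      calc ((2:ℝ) ^ k + 1) * Real.log ((2:ℝ) ^ k + 1)
          ≤ (2 * (2:ℝ) ^ k) * (((k : ℝ) + 1) * Real.log 2) := by
            apply mul_le_mul h1 hlogle hb (by positivity)
        _ = (2:ℝ) ^ k * (2 * Real.log 2 * ((k : ℝ) + 1)) := by ring
    calc (2 * Real.log 2 * ((k : ℝ) + 1))⁻¹
        = (2:ℝ) ^ k * ((2:ℝ) ^ k * (2 * Real.log 2 * ((k : ℝ) + 1)))⁻¹ := by
          rw [mul_inv]
          field_simp
      _ ≤ (2:ℝ) ^ k * (((2:ℝ) ^ k + 1) * Real.log ((2:ℝ) ^ k + 1))⁻¹ := by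
          apply mul_le_mul_of_nonneg_left _ (by positivity)
          exact inv_anti₀ hXpos hXle
  have hsum2 : Summable (fun k : ℕ => (2 * Real.log 2 * ((k : ℝ) + 1))⁻¹) := by
    apply Summable.of_nonneg_of_le (fun k => by positivity) key hcond
  have hsum3 : Summable (fun k : ℕ => (((k : ℝ) + 1))⁻¹) := by
    apply (hsum2.mul_left (2 * Real.log 2)).congr
    intro k
    rw [mul_inv]
    have : (0:ℝ) < (k:ℝ) + 1 := by positivity
    field_simp
  have hsum4 : Summable (fun k : ℕ => ((k : ℝ))⁻¹) := by
    rw [← summable_nat_add_iff 1]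
    simpa using hsum3
  exact Real.not_summable_natCast_inv hsum4

set_option maxHeartbeats 1000000 in
private lemma gauss_aux (c : ℕ → ℝ) (hc : ∀ k, 0 < c k) {p : ℝ} (hp : 1 < p)
    (r C : ℝ) (e : ℕ → ℝ) (he : ∀ k, |e k| ≤ C)
    (hrat : ∀ k : ℕ, 1 ≤ k → c (k + 1) / c k = 1 - r / k + e k / (k : ℝ) ^ p) :
    Summable c ↔ 1 < r := by
  have hC : 0 ≤ C := le_trans (abs_nonneg _) (he 0)
  constructor
  · intro hs
    by_contra hr
    push_neg at hr
    set d : ℕ → ℝ := fun k => ((k : ℝ) * Real.log k)⁻¹ with hddef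
    have hp1 : (0:ℝ) < p - 1 := by linarith
    have g1 := tendsto_log_div_self
    have g2 : Tendsto (fun k : ℕ => 1 / (k:ℝ)) atTop (nhds 0) :=
      tendsto_one_div_atTop_nhds_zero_nat
    have g3 : Tendsto (fun k : ℕ => C * (1 + 1 / (k:ℝ)) * (Real.log k / (k:ℝ) ^ (p - 1)))
        atTop (nhds 0) := by
      have h31 : Tendsto (fun k : ℕ => C * (1 + 1 / (k:ℝ))) atTop (nhds (C * (1 + 0))) :=
        tendsto_const_nhds.mul (tendsto_const_nhds.add g2)
      have := h31.mul (tendsto_log_div_rpow (p - 1) hp1)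
      simpa using this
    have g4 := tendsto_const_div_rpow C p (by linarith)
    have hG : Tendsto (fun k : ℕ => Real.log k / (k:ℝ) + 1 / (k:ℝ)
        + C * (1 + 1 / (k:ℝ)) * (Real.log k / (k:ℝ) ^ (p - 1)) + C / (k:ℝ) ^ p)
        atTop (nhds 0) := by
      have := ((g1.add g2).add g3).add g4
      simpa using this
    have hev := hG.eventually_lt_const (show (0:ℝ) < 1/2 by norm_num)
    obtain ⟨N0, hN0⟩ := eventually_atTop.mp hev
    set N : ℕ := max N0 2 with hNdef
    have hN2 : 2 ≤ N := le_max_right _ _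
    have hdpos : ∀ k, N ≤ k → 0 < d k := by
      intro k hk
      have hk2 : (2:ℝ) ≤ (k:ℝ) := by exact_mod_cast hN2.trans hk
      have hL : 0 < Real.log k := Real.log_pos (by linarith)
      have hK : (0:ℝ) < (k:ℝ) := by linarith
      have : (0:ℝ) < (k:ℝ) * Real.log k := by positivity
      positivity
    have key : ∀ k, N ≤ k → d (k + 1) * c k ≤ d k * c (k + 1) := by
      intro k hk
      have hk2 : (2:ℝ) ≤ (k:ℝ) := by exact_mod_cast hN2.trans hk
      have hk1 : 1 ≤ k := le_trans (by omega) hk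
      have hK : (0:ℝ) < (k:ℝ) := by linarith
      have hL : 0 < Real.log k := Real.log_pos (by linarith)
      have hL1 : 0 < Real.log ((k:ℝ) + 1) := Real.log_pos (by linarith)
      have hQ : (0:ℝ) < (k:ℝ) ^ (p - 1) := Real.rpow_pos_of_pos hK _
      have hsplit : (k:ℝ) ^ p = (k:ℝ) ^ (p - 1) * k := by
        have h0 := Real.rpow_add hK (p - 1) 1
        rw [Real.rpow_one, sub_add_cancel] at h0
        exact h0
      have hGk := hN0 k (le_trans (le_max_left _ _) hk)
      have hlog1 : Real.log (k:ℝ) + 1 / ((k:ℝ) + 1) ≤ Real.log ((k:ℝ) + 1) := by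
        have hd0 : Real.log ((k:ℝ) / ((k:ℝ) + 1))
            = Real.log (k:ℝ) - Real.log ((k:ℝ) + 1) :=
          Real.log_div (by linarith) (by linarith)
        have h1 := Real.log_le_sub_one_of_pos (show (0:ℝ) < (k:ℝ) / ((k:ℝ) + 1) by positivity)
        have h2 : (k:ℝ) / ((k:ℝ) + 1) - 1 = -(1 / ((k:ℝ) + 1)) := by field_simp; ring
        rw [hd0, h2] at h1
        linarith
      -- lower bound on the ratio factor
      obtain ⟨w, hwdef⟩ : ∃ w : ℝ, w = 1 - 1 / (k:ℝ) - C / (k:ℝ) ^ p := ⟨_, rfl⟩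
      have hGnn1 : 0 ≤ Real.log (k:ℝ) / (k:ℝ) := by positivity
      have hGnn2 : 0 ≤ C * (1 + 1 / (k:ℝ)) * (Real.log (k:ℝ) / (k:ℝ) ^ (p - 1)) := by positivity
      have hw2 : 1 / 2 ≤ w := by
        rw [hwdef]
        linarith
      have hw0 : (0:ℝ) ≤ w := le_trans (by norm_num) hw2
      have hck1 : c (k + 1) = c k * (1 - r / (k:ℝ) + e k / (k:ℝ) ^ p) := by
        have h0 := hrat k hk1
        rw [div_eq_iff (ne_of_gt (hc k))] at h0
        rw [h0]; ring
      have hwle : c k * w ≤ c (k + 1) := by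
        rw [hck1]
        apply mul_le_mul_of_nonneg_left _ (hc k).le
        have h1 : -C ≤ e k := neg_le_of_abs_le (he k)
        have h2 : -C / (k:ℝ) ^ p ≤ e k / (k:ℝ) ^ p := by gcongr
        have h3 : r / (k:ℝ) ≤ 1 / (k:ℝ) := by gcongr
        rw [hwdef]
        have : -C / (k:ℝ) ^ p = -(C / (k:ℝ) ^ p) := by ring
        linarith
      -- main inequality : X ≤ Y * w
      have hYlb : ((k:ℝ) + 1) * Real.log (k:ℝ) + 1 ≤ ((k:ℝ) + 1) * Real.log ((k:ℝ) + 1) := by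
        have h1 := mul_le_mul_of_nonneg_left hlog1 (show (0:ℝ) ≤ (k:ℝ) + 1 by linarith)
        have he1 : ((k:ℝ) + 1) * (Real.log (k:ℝ) + 1 / ((k:ℝ) + 1))
            = ((k:ℝ) + 1) * Real.log (k:ℝ) + 1 := by
          field_simp
        rw [he1] at h1
        exact h1
      have hident : (((k:ℝ) + 1) * Real.log (k:ℝ) + 1) * w - (k:ℝ) * Real.log (k:ℝ)
          = 1 - (Real.log (k:ℝ) / (k:ℝ) + 1 / (k:ℝ)
            + C * (1 + 1 / (k:ℝ)) * (Real.log (k:ℝ) / (k:ℝ) ^ (p - 1)) + C / (k:ℝ) ^ p) := by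
        rw [hwdef, hsplit]
        field_simp
        ring
      have hXY : (k:ℝ) * Real.log (k:ℝ) * c k ≤ ((k:ℝ) + 1) * Real.log ((k:ℝ) + 1) * c (k + 1) := by
        have hyw : (k:ℝ) * Real.log (k:ℝ) ≤ ((k:ℝ) + 1) * Real.log ((k:ℝ) + 1) * w := by
          have h5 : (((k:ℝ) + 1) * Real.log (k:ℝ) + 1) * w
              ≤ ((k:ℝ) + 1) * Real.log ((k:ℝ) + 1) * w :=
            mul_le_mul_of_nonneg_right hYlb hw0
          linarith [hident, hGk]
        calc (k:ℝ) * Real.log (k:ℝ) * c k ≤ (((k:ℝ) + 1) * Real.log ((k:ℝ) + 1) * w) * c k := by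
              apply mul_le_mul_of_nonneg_right hyw (hc k).le
          _ = ((k:ℝ) + 1) * Real.log ((k:ℝ) + 1) * (c k * w) := by ring
          _ ≤ ((k:ℝ) + 1) * Real.log ((k:ℝ) + 1) * c (k + 1) :=
              mul_le_mul_of_nonneg_left hwle (mul_nonneg (by linarith) hL1.le)
      have hcast : ((k + 1 : ℕ) : ℝ) = (k:ℝ) + 1 := by push_cast; ring
      show (((k + 1 : ℕ) : ℝ) * Real.log ((k + 1 : ℕ) : ℝ))⁻¹ * c k
          ≤ ((k:ℝ) * Real.log (k:ℝ))⁻¹ * c (k + 1)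
      rw [hcast]
      set X : ℝ := (k:ℝ) * Real.log (k:ℝ) with hXdef
      set Y : ℝ := ((k:ℝ) + 1) * Real.log ((k:ℝ) + 1) with hYdef
      have hX : 0 < X := by rw [hXdef]; positivity
      have hY : 0 < Y := by rw [hYdef]; positivity
      have h8 : Y⁻¹ * c k = (X⁻¹ * Y⁻¹) * (X * c k) := by
        field_simp
      have h9 : X⁻¹ * c (k + 1) = (X⁻¹ * Y⁻¹) * (Y * c (k + 1)) := by
        field_simp
      rw [h8, h9]
      exact mul_le_mul_of_nonneg_left hXY (by positivity)
    have hcomp := ratio_comp hdpos (fun k _ => hc k) key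
    have hdsum : Summable (fun n : ℕ => d (n + N)) := by
      refine Summable.of_nonneg_of_le (f := fun n : ℕ => (d N / c N) * c (n + N))
        (fun n => (hdpos _ (by omega)).le) (fun n => ?_)
        (((summable_nat_add_iff N).mpr hs).mul_left _)
      have h7 := hcomp (n + N) (by omega)
      show d (n + N) ≤ d N / c N * c (n + N)
      rw [div_mul_eq_mul_div, le_div_iff₀ (hc N)]
      linarith
    exact not_summable_nat_log_inv ((summable_nat_add_iff N).mp hdsum)
  · intro hr
    set s : ℝ := (1 + r) / 2 with hsdef
    have hs1 : 1 < s := by rw [hsdef]; linarith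
    have hsr : s < r := by rw [hsdef]; linarith
    have ht := tendsto_const_div_rpow C (p - 1) (by linarith)
    have hev : ∀ᶠ k : ℕ in atTop, C / (k : ℝ) ^ (p - 1) < r - s :=
      ht.eventually_lt_const (by linarith)
    obtain ⟨N0, hN0⟩ := eventually_atTop.mp hev
    set N : ℕ := max N0 1 with hNdef
    have hN1 : 1 ≤ N := le_max_right _ _
    set d : ℕ → ℝ := fun k => (k : ℝ) ^ (-s) with hddef
    have hdpos : ∀ k, N ≤ k → 0 < d k := by
      intro k hk
      have : (0:ℝ) < k := by exact_mod_cast lt_of_lt_of_le Nat.zero_lt_one (hN1.trans hk)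
      exact Real.rpow_pos_of_pos this _
    have key : ∀ k, N ≤ k → c (k + 1) * d k ≤ c k * d (k + 1) := by
      intro k hk
      have hk1 : 1 ≤ k := le_trans hN1 hk
      have hkpos : (0:ℝ) < k := by exact_mod_cast hk1
      have hkp : (0:ℝ) < (k:ℝ) ^ p := Real.rpow_pos_of_pos hkpos p
      have hkp1 : (0:ℝ) < (k:ℝ) ^ (p - 1) := Real.rpow_pos_of_pos hkpos _
      have hsplit : (k:ℝ) ^ p = (k:ℝ) ^ (p - 1) * k := by
        have h0 := Real.rpow_add hkpos (p - 1) 1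
        rw [Real.rpow_one, sub_add_cancel] at h0
        exact h0
      have heup : e k / (k:ℝ) ^ p ≤ (r - s) / (k:ℝ) := by
        have h1 : e k ≤ C := (abs_le.mp (he k)).2
        have h4 : C / (k:ℝ) ^ (p - 1) ≤ r - s :=
          (hN0 k (le_trans (le_max_left _ _) hk)).le
        calc e k / (k:ℝ) ^ p ≤ C / (k:ℝ) ^ p := by gcongr
          _ = (C / (k:ℝ) ^ (p - 1)) / k := by rw [hsplit, ← div_div]
          _ ≤ (r - s) / k := by gcongr
      have hratle : c (k + 1) ≤ c k * (1 - s / k) := by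
        have h5 : c (k + 1) / c k ≤ 1 - s / k := by
          rw [hrat k hk1]
          have h6 : r / (k:ℝ) - s / k = (r - s) / k := by ring
          linarith
        have := (div_le_iff₀ (hc k)).mp h5
        linarith [this]
      have hxk : (0:ℝ) < 1 + 1 / (k:ℝ) := by positivity
      have hup : (1 + 1 / (k:ℝ)) ^ s ≤ Real.exp (s / k) := by
        rw [Real.rpow_def_of_pos hxk]
        apply Real.exp_le_exp.mpr
        have hlog := Real.log_le_sub_one_of_pos hxk
        have hs0 : (0:ℝ) ≤ s := by linarith
        calc Real.log (1 + 1 / (k:ℝ)) * s ≤ (1 / (k:ℝ)) * s := by nlinarith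
          _ = s / k := by ring
      have hone : (1 - s / (k:ℝ)) * Real.exp (s / k) ≤ 1 := by
        have h1 := Real.add_one_le_exp (-(s / (k:ℝ)))
        have h2 := mul_le_mul_of_nonneg_right h1 (Real.exp_pos (s / k)).le
        rw [← Real.exp_add, neg_add_cancel, Real.exp_zero] at h2
        nlinarith
      have hbern : 1 - s / (k:ℝ) ≤ (1 + 1 / (k:ℝ)) ^ (-s) := by
        have hXpos : (0:ℝ) < (1 + 1 / (k:ℝ)) ^ s := Real.rpow_pos_of_pos hxk s
        rw [Real.rpow_neg hxk.le]
        rcases le_or_gt (1 - s / (k:ℝ)) 0 with h | h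
        · exact le_trans h (by positivity)
        · have hmul : (1 - s / (k:ℝ)) * (1 + 1 / (k:ℝ)) ^ s ≤ 1 := by nlinarith
          rw [inv_eq_one_div]
          exact (le_div_iff₀ hXpos).mpr hmul
      have hcast : ((k + 1 : ℕ) : ℝ) = (k:ℝ) + 1 := by push_cast; ring
      have hfact : ((k:ℝ) + 1) ^ (-s) = (k:ℝ) ^ (-s) * (1 + 1 / (k:ℝ)) ^ (-s) := by
        rw [← Real.mul_rpow hkpos.le hxk.le]
        congr 1
        field_simp
      have hdk : (0:ℝ) ≤ (k:ℝ) ^ (-s) := (Real.rpow_pos_of_pos hkpos _).le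
      show c (k + 1) * (k:ℝ) ^ (-s) ≤ c k * ((k + 1 : ℕ) : ℝ) ^ (-s)
      rw [hcast, hfact]
      calc c (k + 1) * (k:ℝ) ^ (-s) ≤ (c k * (1 - s / k)) * (k:ℝ) ^ (-s) := by
            apply mul_le_mul_of_nonneg_right hratle hdk
        _ ≤ (c k * (1 + 1 / (k:ℝ)) ^ (-s)) * (k:ℝ) ^ (-s) := by
            apply mul_le_mul_of_nonneg_right
              (mul_le_mul_of_nonneg_left hbern (hc k).le) hdk
        _ = c k * ((k:ℝ) ^ (-s) * (1 + 1 / (k:ℝ)) ^ (-s)) := by ring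
    have hcomp := ratio_comp (fun k _ => hc k) hdpos key
    have hNpos : (0:ℝ) < d N := hdpos N le_rfl
    rw [← summable_nat_add_iff N]
    have h1 : Summable (fun n : ℕ => ((n:ℝ)) ^ (-s)) :=
      Real.summable_nat_rpow.mpr (by linarith)
    refine Summable.of_nonneg_of_le (f := fun n : ℕ => (c N / d N) * (((n + N : ℕ) : ℝ)) ^ (-s))
      (fun n => (hc _).le) (fun n => ?_)
      (((summable_nat_add_iff N).mpr h1).mul_left _)
    have h7 := hcomp (n + N) (by omega)
    show c (n + N) ≤ c N / d N * ((n + N : ℕ) : ℝ) ^ (-s)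
    rw [div_mul_eq_mul_div, le_div_iff₀ hNpos]
    calc c (n + N) * d N ≤ c N * d (n + N) := h7
      _ = c N * ((n + N : ℕ) : ℝ) ^ (-s) := rfl

theorem second_gauss_test (a : ℕ → ℝ) (ha : ∀ n, 0 < a n)
    (hmono : Antitone a) (p β : ℝ) (hp : 1 < p) (γ : ℕ → ℝ)
    (hγ : ∃ C : ℝ, ∀ n, |γ n| ≤ C)
    (hratio : ∀ n : ℕ, 2 ≤ n →
      a (2 * n) / a n = 1 / 2 - β / Real.log n + γ n / (Real.log n) ^ p) :
    Summable a ↔ Real.log 2 / 2 < β := by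
  obtain ⟨C, hC⟩ := hγ
  have hC0 : 0 ≤ C := le_trans (abs_nonneg _) (hC 0)
  have hL2 : (0:ℝ) < Real.log 2 := Real.log_pos (by norm_num)
  have hL2p : (0:ℝ) < Real.log 2 ^ p := Real.rpow_pos_of_pos hL2 p
  set c : ℕ → ℝ := fun k => 2 ^ k * a (2 ^ k) with hcdef
  have hcpos : ∀ k, 0 < c k := fun k => mul_pos (by positivity) (ha _)
  have hcond : (Summable fun k : ℕ => (2:ℝ) ^ k * a (2 ^ k)) ↔ Summable a :=
    summable_condensed_iff_of_nonneg (fun n => (ha n).le) (fun m n _ hmn => hmono hmn)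
  set e : ℕ → ℝ := fun k => 2 * γ (2 ^ k) / Real.log 2 ^ p with hedef
  have he : ∀ k, |e k| ≤ 2 * C / Real.log 2 ^ p := by
    intro k
    have h1 : |e k| = 2 * |γ (2 ^ k)| / Real.log 2 ^ p := by
      rw [hedef, abs_div, abs_of_pos hL2p, abs_mul, abs_two]
    rw [h1]
    gcongr
    exact hC _
  have hrat : ∀ k : ℕ, 1 ≤ k → c (k + 1) / c k
      = 1 - (2 * β / Real.log 2) / k + e k / (k:ℝ) ^ p := by
    intro k hk1
    have hkpos : (0:ℝ) < k := by exact_mod_cast hk1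
    have hkp : (0:ℝ) < (k:ℝ) ^ p := Real.rpow_pos_of_pos hkpos p
    have hn : 2 ≤ 2 ^ k := by
      calc 2 = 2 ^ 1 := (pow_one 2).symm
        _ ≤ 2 ^ k := Nat.pow_le_pow_right (by norm_num) hk1
    have hr0 := hratio (2 ^ k) hn
    have hcast : ((2 ^ k : ℕ) : ℝ) = (2:ℝ) ^ k := by push_cast; ring
    have hlog : Real.log ((2 ^ k : ℕ) : ℝ) = (k:ℝ) * Real.log 2 := by
      rw [hcast, Real.log_pow]
    rw [hlog] at hr0
    have hmulp : ((k:ℝ) * Real.log 2) ^ p = (k:ℝ) ^ p * Real.log 2 ^ p :=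
      Real.mul_rpow (Nat.cast_nonneg k) hL2.le
    rw [hmulp] at hr0
    have hidx : (2:ℕ) ^ (k + 1) = 2 * 2 ^ k := by ring
    have hstep : c (k + 1) / c k = 2 * (a (2 * 2 ^ k) / a (2 ^ k)) := by
      show ((2:ℝ) ^ (k + 1) * a (2 ^ (k + 1))) / ((2:ℝ) ^ k * a (2 ^ k))
          = 2 * (a (2 * 2 ^ k) / a (2 ^ k))
      rw [hidx, pow_succ]
      have h2 : a (2 ^ k) ≠ 0 := (ha _).ne'
      have h3 : (2:ℝ) ^ k ≠ 0 := by positivity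
      field_simp
    rw [hstep, hr0]
    have hkne : (k:ℝ) ≠ 0 := hkpos.ne'
    rw [hedef]
    field_simp
  rw [← hcond, gauss_aux _ hcpos hp (2 * β / Real.log 2) _ e he hrat]
  rw [lt_div_iff₀ hL2, div_lt_iff₀ (show (0:ℝ) < 2 by norm_num)]
  constructor <;> intro h <;> linarith
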